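/- Let G be a finite group and (K,𝒪,k) a p-modular system with k of characteristic p. Then the set of central idempotents of 𝒪G coincides with the set of central idempotents of W(k)G, where W(k) ⊆ 𝒪 is the ring of Witt vectors of k; in particular every block of 𝒪G has coefficients in W(k). -/

import Mathlib

set_option linter.unusedSectionVars false
set_option maxHeartbeats 1000000


namespace WittAux

open WittVector

variable {p : ℕ} [hp : Fact p.Prime]
variable {k : Type*} [Field k] [CharP k p] [PerfectRing k p]

local notation "𝕎" => WittVector p

lemma coeff_init (n j : ℕ) (x : 𝕎 k) :
    (init n x).coeff j = if j < n then x.coeff j else 0 := by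
  simp [init, select, coeff_mk]

lemma pow_p_mul_eq (m : ℕ) (b : 𝕎 k) :
    (p : 𝕎 k) ^ m * b = verschiebung^[m] (frobenius^[m] b) := by
  induction m generalizing b with
  | zero => simp
  | succ m ih =>
    have h1 : (p : 𝕎 k) ^ (m + 1) * b = (p : 𝕎 k) ^ m * ((p : 𝕎 k) * b) := by ring
    rw [h1, ih]
    have h2 : (p : 𝕎 k) * b = verschiebung (frobenius b) := by
      rw [verschiebung_frobenius, mul_comm]
    rw [h2]
    have h3 : frobenius^[m] (verschiebung (frobenius b)) =
        verschiebung (frobenius^[m] (frobenius b)) := by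
      exact ((verschiebung_frobenius_comm.iterate_right m) (frobenius b)).symm
    rw [h3, ← Function.iterate_succ_apply, ← Function.iterate_succ_apply]

lemma iterate_verschiebung_coeff_eq_zero (m : ℕ) (w : 𝕎 k) {i : ℕ} (hi : i < m) :
    (verschiebung^[m] w).coeff i = 0 := by
  induction m generalizing i with
  | zero => omega
  | succ m ih =>
    rw [Function.iterate_succ_apply']
    cases i with
    | zero => exact verschiebung_coeff_zero _
    | succ i => rw [verschiebung_coeff_succ]; exact ih (by omega)

lemma coeff_eq_zero_of_dvd {m : ℕ} {x : 𝕎 k} (h : (p : 𝕎 k) ^ m ∣ x) {i : ℕ} (hi : i < m) :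
    x.coeff i = 0 := by
  obtain ⟨z, rfl⟩ := h
  rw [pow_p_mul_eq]
  exact iterate_verschiebung_coeff_eq_zero m _ hi

lemma dvd_of_coeff_eq_zero {m : ℕ} {x : 𝕎 k} (h : ∀ i < m, x.coeff i = 0) :
    (p : 𝕎 k) ^ m ∣ x := by
  have hx : x = verschiebung^[m] (x.shift m) := eq_iterate_verschiebung h
  obtain ⟨z, hz⟩ := ((frobenius_bijective p k).surjective.iterate m) (x.shift m)
  exact ⟨z, by rw [pow_p_mul_eq, hz, ← hx]⟩

lemma coeff_eq_of_dvd_sub {m : ℕ} {x y : 𝕎 k} (h : (p : 𝕎 k) ^ m ∣ x - y) {i : ℕ}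
    (hi : i < m) : x.coeff i = y.coeff i := by
  have h0 : init m (x - y) = 0 := by
    ext j
    rw [coeff_init]
    split_ifs with hj
    · rw [coeff_eq_zero_of_dvd h hj, zero_coeff]
    · rw [zero_coeff]
  have hx : init m x = init m y := by
    have : x = y + (x - y) := by ring
    rw [this, init_add, h0, add_zero, init_init]
  calc x.coeff i = (init m x).coeff i := by rw [coeff_init, if_pos hi]
    _ = (init m y).coeff i := by rw [hx]
    _ = y.coeff i := by rw [coeff_init, if_pos hi]

lemma dvd_sub_of_coeff_eq {m : ℕ} {x y : 𝕎 k} (h : ∀ i < m, x.coeff i = y.coeff i) :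
    (p : 𝕎 k) ^ m ∣ x - y := by
  apply dvd_of_coeff_eq_zero
  intro i hi
  have hx : init m x = init m y := by
    ext j
    rw [coeff_init, coeff_init]
    split_ifs with hj
    · exact h j hj
    · rfl
  have : init m (x - y) = 0 := by
    rw [init_sub, hx, sub_self]
    ext j
    rw [coeff_init]
    split_ifs <;> simp [zero_coeff]
  calc (x - y).coeff i = (init m (x - y)).coeff i := by rw [coeff_init, if_pos hi]
    _ = 0 := by rw [this, zero_coeff]

lemma eq_zero_of_forall_dvd {x : 𝕎 k} (h : ∀ n, (p : 𝕎 k) ^ n ∣ x) : x = 0 := by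
  ext i
  rw [zero_coeff]
  exact coeff_eq_zero_of_dvd (h (i + 1)) (by omega)


end WittAux
instance instCoeFunMAAux {R G : Type*} [Semiring R] :
    CoeFun (MonoidAlgebra R G) (fun _ => G → R) := ⟨fun x => x.coeff⟩

namespace MAAux

variable {R S : Type*} [CommRing R] [CommRing S] {G : Type*} [Group G]

/-- The ring homomorphism on monoid algebras induced by a ring homomorphism on
coefficients. -/
noncomputable def magRH (φ : R →+* S) : MonoidAlgebra R G →+* MonoidAlgebra S G :=
  MonoidAlgebra.liftNCRingHom (MonoidAlgebra.singleOneRingHom.comp φ) (MonoidAlgebra.of S G)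
    (fun r g => by
      have h1 : (MonoidAlgebra.singleOneRingHom.comp φ) r
          = MonoidAlgebra.single (1 : G) (φ r) := rfl
      have h2 : (MonoidAlgebra.of S G) g = MonoidAlgebra.single g (1 : S) := rfl
      rw [Commute, SemiconjBy, h1, h2]
      simp [MonoidAlgebra.single_mul_single])

lemma magRH_apply (φ : R →+* S) (x : MonoidAlgebra R G) :
    magRH φ x = MonoidAlgebra.ofCoeff (Finsupp.mapRange φ φ.map_zero x.coeff) := by
  induction x using MonoidAlgebra.induction_linear with
  | zero => simp
  | add x y hx hy =>
    rw [map_add, hx, hy, MonoidAlgebra.coeff_add, Finsupp.mapRange_add φ.map_add]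
    rfl
  | single a b =>
    show MonoidAlgebra.liftNC _ _ _ = _
    rw [MonoidAlgebra.coeff_single, Finsupp.mapRange_single, MonoidAlgebra.liftNC_single]
    simp [MonoidAlgebra.singleOneRingHom, MonoidAlgebra.single_mul_single]

lemma magRH_coeff (φ : R →+* S) (x : MonoidAlgebra R G) (g : G) :
    magRH φ x g = φ (x g) := by
  rw [magRH_apply, MonoidAlgebra.coeff_ofCoeff, Finsupp.mapRange_apply]

lemma coeff_mul_mem (I J : Ideal R) {x y : MonoidAlgebra R G}
    (hx : ∀ g, x g ∈ I) (hy : ∀ g, y g ∈ J) (g : G) : (x * y) g ∈ I * J := by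
  classical
  rw [MonoidAlgebra.mul_apply]
  unfold Finsupp.sum
  refine Submodule.sum_mem _ fun a _ => Submodule.sum_mem _ fun b _ => ?_
  dsimp only
  split_ifs
  · exact Ideal.mul_mem_mul (hx a) (hy b)
  · exact zero_mem _

lemma coeff_mul_mem_left (I : Ideal R) {x : MonoidAlgebra R G} (y : MonoidAlgebra R G)
    (hx : ∀ g, x g ∈ I) (g : G) : (x * y) g ∈ I := by
  classical
  rw [MonoidAlgebra.mul_apply]
  unfold Finsupp.sum
  refine Submodule.sum_mem _ fun a _ => Submodule.sum_mem _ fun b _ => ?_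
  dsimp only
  split_ifs
  · exact I.mul_mem_right _ (hx a)
  · exact zero_mem _

lemma coeff_mul_mem_right (I : Ideal R) (x : MonoidAlgebra R G) {y : MonoidAlgebra R G}
    (hy : ∀ g, y g ∈ I) (g : G) : (x * y) g ∈ I := by
  classical
  rw [MonoidAlgebra.mul_apply]
  unfold Finsupp.sum
  refine Submodule.sum_mem _ fun a _ => Submodule.sum_mem _ fun b _ => ?_
  dsimp only
  split_ifs
  · exact I.mul_mem_left _ (hy b)
  · exact zero_mem _

/-- Newton-iteration identity, one variable. -/
lemma idem_identity₁ {A : Type*} [Ring A] (x : A) :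
    (3*x^2 - 2*x^3) * (3*x^2 - 2*x^3) - (3*x^2 - 2*x^3)
      = (x*x - x) * ((x*x - x) * (4*(x*x - x) - 3)) := by
  noncomm_ring

lemma idem_identity₂ {A : Type*} [Ring A] (x : A) :
    (3*x^2 - 2*x^3) - x = (x*x - x) * (1 - 2*x) := by
  noncomm_ring

/-- Newton-iteration identity relative to a central idempotent. -/
lemma idem_identity₃ {A : Type*} [Ring A] (e x : A) (he : e * e = e)
    (hc : ∀ y : A, y * e = e * y) :
    (3*x^2 - 2*x^3) - e
      = (x - e) * ((x - e) * (3 - 2*(x - e) - 6*e)) := by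
  have heC : e ∈ Subring.center A := Subring.mem_center_iff.mpr hc
  set Z := Subring.center A
  set ec : Z := ⟨e, heC⟩ with hec
  have hcomm : ∀ a : Z, Commute ((Subring.subtype Z) a) x := fun a =>
    (Subring.mem_center_iff.mp a.2 x).symm
  let Φ : Polynomial Z →+* A := Polynomial.eval₂RingHom' (Subring.subtype Z) x hcomm
  have key : (Polynomial.C ec) * (Polynomial.C ec) = Polynomial.C ec := by
    rw [← map_mul]
    congr 1
    exact Subtype.ext he
  have polyid : (3*Polynomial.X^2 - 2*Polynomial.X^3 : Polynomial Z) - Polynomial.C ec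
      = (Polynomial.X - Polynomial.C ec) * ((Polynomial.X - Polynomial.C ec) *
        (3 - 2*(Polynomial.X - Polynomial.C ec) - 6*Polynomial.C ec)) := by
    linear_combination (1 + 4*(Polynomial.C ec) - 6*(Polynomial.X : Polynomial Z)) * key
  have := congrArg Φ polyid
  have hX : Φ Polynomial.X = x := Polynomial.eval₂_X _ _
  have hC : Φ (Polynomial.C ec) = e := Polynomial.eval₂_C _ _
  simpa only [map_sub, map_mul, map_pow, map_add, map_ofNat, hX, hC] using this

/-- Newton iteration for idempotent lifting. -/
def newton {A : Type*} [Ring A] (x : A) : ℕ → A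
  | 0 => x
  | n+1 => 3*(newton x n)^2 - 2*(newton x n)^3

end MAAux

/-- Let `G` be a finite group and `(K, 𝒪, k)` a `p`-modular system: `𝒪` a
complete discrete valuation ring of characteristic `0` with algebraically closed residue
field `k` of characteristic `p`, and let `ι : W(k) → 𝒪` be the canonical embedding of the
Witt vectors (a ring homomorphism compatible with the residue maps).  Then the set of
central idempotents of `𝒪G` coincides with the (image of the) set of central idempotents
of `W(k)G`; in particular every block of `𝒪G` has coefficients in `W(k)`. -/
theorem central_idempotents_of_OG_eq_wittVector_ones
    (p : ℕ) [Fact p.Prime] (G : Type*) [Group G] [Finite G]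
    (𝒪 : Type*) [CommRing 𝒪] [IsDomain 𝒪] [IsDiscreteValuationRing 𝒪] [CharZero 𝒪]
    [IsAdicComplete (IsLocalRing.maximalIdeal 𝒪) 𝒪]
    [CharP (IsLocalRing.ResidueField 𝒪) p] [IsAlgClosed (IsLocalRing.ResidueField 𝒪)]
    (ι : WittVector p (IsLocalRing.ResidueField 𝒪) →+* 𝒪)
    (hι : ∀ x : WittVector p (IsLocalRing.ResidueField 𝒪),
      IsLocalRing.residue 𝒪 (ι x) = x.coeff 0) :
    (fun e₀ : MonoidAlgebra (WittVector p (IsLocalRing.ResidueField 𝒪)) G =>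
        (MonoidAlgebra.ofCoeff (Finsupp.mapRange ι ι.map_zero e₀.coeff) : MonoidAlgebra 𝒪 G)) ''
      {e₀ : MonoidAlgebra (WittVector p (IsLocalRing.ResidueField 𝒪)) G |
        IsIdempotentElem e₀ ∧ ∀ y, y * e₀ = e₀ * y} =
    {e : MonoidAlgebra 𝒪 G | IsIdempotentElem e ∧ ∀ y, y * e = e * y} := by
  classical
  haveI := Fintype.ofFinite G
  have hppos : p ≠ 0 := (Fact.out : p.Prime).ne_zero
  set J : Ideal 𝒪 := IsLocalRing.maximalIdeal 𝒪 with hJdef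
  set F : MonoidAlgebra (WittVector p (IsLocalRing.ResidueField 𝒪)) G →+* MonoidAlgebra 𝒪 G :=
    MAAux.magRH ι with hFdef
  have hFapp : ∀ x, MonoidAlgebra.ofCoeff (Finsupp.mapRange ι ι.map_zero x.coeff) = F x :=
    fun x => (MAAux.magRH_apply ι x).symm
  have hFcoeff : ∀ x g, F x g = ι (x g) := MAAux.magRH_coeff ι
  have hmemJ : ∀ c : 𝒪, c ∈ J ↔ IsLocalRing.residue 𝒪 c = 0 :=
    fun c => (Ideal.Quotient.eq_zero_iff_mem).symm
  have hpJ : (p : 𝒪) ∈ J := by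
    rw [hmemJ, map_natCast]
    exact CharP.cast_eq_zero (IsLocalRing.ResidueField 𝒪) p
  -- injectivity of ι
  have hιinj0 : ∀ x, ι x = 0 → x = 0 := by
    intro x hx
    apply WittAux.eq_zero_of_forall_dvd
    intro n
    induction n with
    | zero => simpa using one_dvd x
    | succ n ih =>
      obtain ⟨y, hy⟩ := ih
      have hιy : ι y = 0 := by
        have h1 : (p : 𝒪) ^ n * ι y = 0 := by
          rw [hy, map_mul, map_pow, map_natCast] at hx
          exact hx
        rcases mul_eq_zero.mp h1 with h | h
        · exact absurd h (pow_ne_zero _ (Nat.cast_ne_zero.mpr hppos))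
        · exact h
      have hc0 : y.coeff 0 = 0 := by rw [← hι y, hιy, map_zero]
      have hdvd : (p : WittVector p (IsLocalRing.ResidueField 𝒪)) ∣ y := by
        have := WittAux.dvd_of_coeff_eq_zero (m := 1) (x := y)
          (fun i hi => by interval_cases i; exact hc0)
        simpa using this
      obtain ⟨z, hz⟩ := hdvd
      exact ⟨z, by rw [hy, hz, pow_succ, mul_assoc]⟩
  have hFinj : Function.Injective F := by
    intro x y hxy
    apply MonoidAlgebra.ext; apply Finsupp.ext
    intro g
    have h1 : ι (x g) = ι (y g) := by rw [← hFcoeff, ← hFcoeff, hxy]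
    have h2 : ι (x g - y g) = 0 := by rw [map_sub, h1, sub_self]
    have := hιinj0 _ h2
    exact sub_eq_zero.mp this
  apply Set.Subset.antisymm
  · -- easy direction
    rintro e ⟨e₀, ⟨he₀, hc₀⟩, rfl⟩
    obtain ⟨e₀, rfl⟩ :
        (∃ E : MonoidAlgebra (WittVector p (IsLocalRing.ResidueField 𝒪)) G, E = e₀) :=
      ⟨e₀, rfl⟩
    simp only [Set.mem_setOf_eq]
    rw [hFapp e₀]
    refine ⟨?_, ?_⟩
    · show F e₀ * F e₀ = F e₀
      rw [← map_mul, he₀]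
    · intro y
      induction y using MonoidAlgebra.induction_on with
      | of g =>
        have hg1 : (MonoidAlgebra.of 𝒪 G g : MonoidAlgebra 𝒪 G)
            = F (MonoidAlgebra.single g 1) := by
          show (MonoidAlgebra.single g (1:𝒪) : MonoidAlgebra 𝒪 G) = _
          rw [← hFapp, MonoidAlgebra.coeff_single, Finsupp.mapRange_single, map_one]; rfl
        rw [hg1, ← map_mul, ← map_mul, hc₀]
      | add f g hf hg => rw [add_mul, mul_add, hf, hg]
      | smul r f hf => rw [smul_mul_assoc, mul_smul_comm, hf]
  · -- hard direction
    rintro e ⟨he, hce⟩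
    obtain ⟨e, rfl⟩ : (∃ E : MonoidAlgebra 𝒪 G, E = e) := ⟨e, rfl⟩
    have he' : e * e = e := he.eq
    set σ : 𝒪 → WittVector p (IsLocalRing.ResidueField 𝒪) :=
      fun c => WittVector.teichmuller p (IsLocalRing.residue 𝒪 c) with hσdef
    have hσ0 : σ 0 = 0 := by
      rw [hσdef]
      show WittVector.teichmuller p (IsLocalRing.residue 𝒪 0) = 0
      rw [map_zero]
      exact WittVector.teichmuller_zero p
    set a : ℕ → MonoidAlgebra (WittVector p (IsLocalRing.ResidueField 𝒪)) G :=
      MAAux.newton (MonoidAlgebra.ofCoeff (Finsupp.mapRange σ hσ0 e.coeff)) with hadef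
    have ha0 : a 0 = MonoidAlgebra.ofCoeff (Finsupp.mapRange σ hσ0 e.coeff) := rfl
    have hasucc : ∀ n, a (n+1) = 3*(a n)^2 - 2*(a n)^3 := fun n => rfl
    set I : Ideal (WittVector p (IsLocalRing.ResidueField 𝒪)) :=
      Ideal.span {(p : WittVector p (IsLocalRing.ResidueField 𝒪))} with hIdef
    have hImem : ∀ (n : ℕ) w, w ∈ I^n ↔ (p : WittVector p (IsLocalRing.ResidueField 𝒪))^n ∣ w := by
      intro n w
      rw [hIdef, Ideal.span_singleton_pow, Ideal.mem_span_singleton]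
    set ρ := MAAux.magRH (G := G) (IsLocalRing.residue 𝒪) with hρdef
    have hρF : ∀ x g, ρ (F x) g = (x g).coeff 0 := by
      intro x g
      rw [hρdef, MAAux.magRH_coeff, hFcoeff, hι]
    have hρFa0 : ρ (F (a 0)) = ρ e := by
      apply MonoidAlgebra.ext; apply Finsupp.ext; intro g
      rw [hρF, hρdef, MAAux.magRH_coeff, ha0, MonoidAlgebra.coeff_ofCoeff, Finsupp.mapRange_apply, hσdef]
      exact WittVector.teichmuller_coeff_zero p _
    -- base bound on the Witt side
    have hbase : ∀ g, (a 0 * a 0 - a 0) g ∈ I ^ 1 := by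
      intro g
      have hcoeff0 : ((a 0 * a 0 - a 0) g).coeff 0 = 0 := by
        have h1 : ((a 0 * a 0 - a 0) g).coeff 0 = ρ (F (a 0 * a 0 - a 0)) g := (hρF _ g).symm
        have h2 : ρ (F (a 0 * a 0 - a 0)) = 0 := by
          have h3 : ρ (F (a 0 * a 0 - a 0)) = ρ (F (a 0)) * ρ (F (a 0)) - ρ (F (a 0)) := by
            rw [map_sub, map_mul, map_sub, map_mul]
          have h4 : ρ e * ρ e - ρ e = ρ (e * e - e) := by rw [map_sub, map_mul]
          have h5 : e * e - e = 0 := by rw [he']; exact sub_self e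
          rw [h3, hρFa0, h4, h5, map_zero]
        rw [h1, h2, MonoidAlgebra.coeff_zero, Finsupp.zero_apply]
      rw [pow_one, hIdef, Ideal.mem_span_singleton]
      have := WittAux.dvd_of_coeff_eq_zero (m := 1)
        (x := (a 0 * a 0 - a 0) g)
        (fun i hi => by rw [Nat.lt_one_iff] at hi; subst hi; exact hcoeff0)
      simpa using this
    have hA : ∀ n g, (a n * a n - a n) g ∈ I ^ (2^n) := by
      intro n
      induction n with
      | zero => simpa using hbase
      | succ n ih =>
        intro g
        rw [hasucc n, MAAux.idem_identity₁ (a n)]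
        have hmem := MAAux.coeff_mul_mem (I^(2^n)) (I^(2^n))
          (x := a n * a n - a n)
          (y := (a n * a n - a n) * (4*(a n * a n - a n) - 3)) ih
          (MAAux.coeff_mul_mem_left (I^(2^n)) (4*(a n * a n - a n) - 3) ih) g
        rw [← pow_add] at hmem
        rwa [show 2^n + 2^n = 2^(n+1) by ring] at hmem
    have hAd : ∀ n g, (a (n+1) - a n) g ∈ I ^ (2^n) := by
      intro n g
      rw [hasucc n, MAAux.idem_identity₂ (a n)]
      exact MAAux.coeff_mul_mem_left _ _ (hA n) g
    have hAc : ∀ n j g, (a (n+j) - a n) g ∈ I ^ (2^n) := by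
      intro n j
      induction j with
      | zero =>
        intro g
        rw [Nat.add_zero, sub_self, MonoidAlgebra.coeff_zero, Finsupp.zero_apply]
        exact zero_mem _
      | succ j ih =>
        intro g
        have h1 : a (n+(j+1)) - a n = (a (n+j+1) - a (n+j)) + (a (n+j) - a n) := by
          rw [show n+(j+1) = n+j+1 from rfl]; abel
        rw [h1, MonoidAlgebra.coeff_add, Finsupp.add_apply]
        refine add_mem ?_ (ih g)
        exact Ideal.pow_le_pow_right
          (Nat.pow_le_pow_right (by norm_num) (Nat.le_add_right n j)) (hAd (n+j) g)
    have hAdvd : ∀ m n g, m ≤ n →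
        (p : WittVector p (IsLocalRing.ResidueField 𝒪))^(2^m) ∣ (a n g - a m g) := by
      intro m n g hmn
      have h := hAc m (n - m) g
      rw [Nat.add_sub_cancel' hmn] at h
      rw [hImem] at h
      rwa [MonoidAlgebra.coeff_sub, Finsupp.sub_apply] at h
    have hstab : ∀ (g : G) (i n : ℕ), i < n → (a n g).coeff i = (a (i+1) g).coeff i := by
      intro g i n hin
      have h1 : (a (max n (i+1)) g).coeff i = (a n g).coeff i :=
        WittAux.coeff_eq_of_dvd_sub (hAdvd n _ g (le_max_left _ _))
          (lt_trans hin (Nat.lt_two_pow_self (n := n)))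
      have h2 : (a (max n (i+1)) g).coeff i = (a (i+1) g).coeff i :=
        WittAux.coeff_eq_of_dvd_sub (hAdvd (i+1) _ g (le_max_right _ _))
          (lt_trans (Nat.lt_succ_self i) (Nat.lt_two_pow_self (n := i+1)))
      rw [← h1, h2]
    set L : MonoidAlgebra (WittVector p (IsLocalRing.ResidueField 𝒪)) G :=
      MonoidAlgebra.ofCoeff (Finsupp.equivFunOnFinite.symm
        (fun g => WittVector.mk p (fun i => (a (i+1) g).coeff i))) with hLdef
    have hLg : ∀ g, L g = WittVector.mk p (fun i => (a (i+1) g).coeff i) := fun g => rfl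
    have hLcoeff : ∀ (g : G) (n i : ℕ), i < n → (L g).coeff i = (a n g).coeff i := by
      intro g n i hin
      rw [hLg]
      show (WittVector.mk p fun i => (a (i+1) g).coeff i).coeff i = _
      rw [WittVector.coeff_mk]
      exact (hstab g i n hin).symm
    have hLdvd : ∀ n g,
        (p : WittVector p (IsLocalRing.ResidueField 𝒪))^n ∣ (L g - a n g) := by
      intro n g
      exact WittAux.dvd_sub_of_coeff_eq (fun i hi => hLcoeff g n i hi)
    have hLmem : ∀ n g, (L - a n) g ∈ I^n := by
      intro n g
      rw [MonoidAlgebra.coeff_sub, Finsupp.sub_apply, hImem]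
      exact hLdvd n g
    have hLidem : L * L = L := by
      have key : ∀ n g, (L*L - L) g ∈ I^n := by
        intro n g
        have hsplit : L*L - L
            = (L - a n)*L + a n*(L - a n) + (a n*a n - a n) + (a n - L) := by
          noncomm_ring
        rw [hsplit, MonoidAlgebra.coeff_add, Finsupp.add_apply, MonoidAlgebra.coeff_add, Finsupp.add_apply, MonoidAlgebra.coeff_add, Finsupp.add_apply]
        refine add_mem (add_mem (add_mem ?_ ?_) ?_) ?_
        · exact MAAux.coeff_mul_mem_left _ _ (hLmem n) g
        · exact MAAux.coeff_mul_mem_right _ _ (hLmem n) g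
        · exact Ideal.pow_le_pow_right (Nat.le_of_lt (Nat.lt_two_pow_self (n := n))) (hA n g)
        · rw [show a n - L = -(L - a n) by abel, MonoidAlgebra.coeff_neg, Finsupp.neg_apply]
          exact neg_mem (hLmem n g)
      apply sub_eq_zero.mp
      apply MonoidAlgebra.ext; apply Finsupp.ext
      intro g
      rw [MonoidAlgebra.coeff_zero, Finsupp.zero_apply]
      apply WittAux.eq_zero_of_forall_dvd
      intro n
      rw [← hImem]
      exact key n g
    -- bound on the 𝒪 side
    have hδ : ∀ n g, (F (a n) - e) g ∈ J^(2^n) := by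
      intro n
      induction n with
      | zero =>
        intro g
        have h1 : IsLocalRing.residue 𝒪 ((F (a 0)) g) = IsLocalRing.residue 𝒪 (e g) := by
          rw [hFcoeff, hι]
          have h2 : a 0 g = σ (e g) := by rw [ha0, MonoidAlgebra.coeff_ofCoeff, Finsupp.mapRange_apply]
          rw [h2, hσdef]
          exact WittVector.teichmuller_coeff_zero p _
        have h3 : (F (a 0) - e) g ∈ J := by
          rw [hmemJ, MonoidAlgebra.coeff_sub, Finsupp.sub_apply, map_sub, h1, sub_self]
        simpa using h3
      | succ n ih =>
        intro g
        have hFa : F (a (n+1)) = 3*(F (a n))^2 - 2*(F (a n))^3 := by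
          rw [hasucc n]
          simp only [map_sub, map_mul, map_pow, map_ofNat]
        rw [hFa, MAAux.idem_identity₃ e (F (a n)) he' hce]
        have hmem := MAAux.coeff_mul_mem (J^(2^n)) (J^(2^n))
          (x := F (a n) - e)
          (y := (F (a n) - e) * (3 - 2*(F (a n) - e) - 6*e)) ih
          (MAAux.coeff_mul_mem_left (J^(2^n)) (3 - 2*(F (a n) - e) - 6*e) ih) g
        rw [← pow_add] at hmem
        rwa [show 2^n + 2^n = 2^(n+1) by ring] at hmem
    have hFL : F L = e := by
      have hdiff : ∀ n g, (F L - e) g ∈ J^n := by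
        intro n g
        have h1 : F L - e = F (L - a n) + (F (a n) - e) := by
          rw [map_sub]; abel
        rw [h1, MonoidAlgebra.coeff_add, Finsupp.add_apply]
        refine add_mem ?_
          (Ideal.pow_le_pow_right (Nat.le_of_lt (Nat.lt_two_pow_self (n := n))) (hδ n g))
        rw [hFcoeff]
        obtain ⟨z, hz⟩ := hLdvd n g
        rw [MonoidAlgebra.coeff_sub, Finsupp.sub_apply, hz, map_mul, map_pow, map_natCast]
        exact Ideal.mul_mem_right _ _ (Ideal.pow_mem_pow hpJ n)
      apply sub_eq_zero.mp
      apply MonoidAlgebra.ext; apply Finsupp.ext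
      intro g
      rw [MonoidAlgebra.coeff_zero, Finsupp.zero_apply]
      haveI hH : IsHausdorff J 𝒪 := inferInstance
      apply hH.haus
      intro n
      rw [SModEq.zero, Ideal.smul_top_eq_map, Submodule.restrictScalars_mem]
      have hid : Ideal.map (algebraMap 𝒪 𝒪) (J ^ n) = J ^ n := by
        rw [Algebra.algebraMap_self, Ideal.map_id]
      rw [hid]
      exact hdiff n g
    refine ⟨L, ⟨hLidem, ?_⟩, ?_⟩
    · intro y
      apply hFinj
      rw [map_mul, map_mul, hFL, hce (F y)]
    · show MonoidAlgebra.ofCoeff (Finsupp.mapRange ι ι.map_zero L.coeff) = e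
      rw [hFapp L, hFL]
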